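/- arXiv:2311.12044 — 3 statements merged into one kernel-verified Lean document; each statement's English description precedes it below -/
import Mathlib

section
/- Let K be a number field, P̃ a prime ideal of O_K above 2, n a positive integer, and p a rational prime with p > 2·ord_P̃(2) and ord_𝔮(n) < p for every prime 𝔮 of O_K dividing n. Let (a, b, c) ∈ O_K³ be a non-trivial primitive solution of x⁴ − y⁴ = n z^p with c ∈ P̃. Then either ord_P̃(a² + b²) = ord_P̃(2) and ord_P̃(a² − b²) = p·ord_P̃(c) + ord_P̃(n) − ord_P̃(2), or ord_P̃(a² − b²) = ord_P̃(2) and ord_P̃(a² + b²) = p·ord_P̃(c) + ord_P̃(n) − ord_P̃(2); in particular, min{ord_P̃(a² + b²), ord_P̃(a² − b²)} = ord_P̃(2). -/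
open NumberField IsDedekindDomain

/-- The `v`-adic valuation `ord_v(x) ∈ ℤ` of an element `x` of a number field `K`
(with junk value `0` at `x = 0`). -/
noncomputable def ordK {K : Type*} [Field K] [NumberField K]
    (v : HeightOneSpectrum (𝓞 K)) (x : K) : ℤ :=
  open scoped Classical in
  if hx : x = 0 then 0
  else -(Multiplicative.toAdd (WithZero.unzero ((v.valuation K).ne_zero_iff.mpr hx)))

/-- `x ∈ K^×` is an `S`-unit: `ord_𝔭(x) = 0` for all primes `𝔭 ∉ S`. -/
def IsSUnit {K : Type*} [Field K] [NumberField K]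
    (S : Set (HeightOneSpectrum (𝓞 K))) (x : K) : Prop :=
  x ≠ 0 ∧ ∀ v ∉ S, ordK v x = 0

section OrdAux

variable {K : Type*} [Field K] [NumberField K] (v : HeightOneSpectrum (𝓞 K))

lemma ordK_val_eq {x : K} (hx : x ≠ 0) :
    v.valuation K x =
      ((Multiplicative.ofAdd (-ordK v x) : Multiplicative ℤ) : WithZero (Multiplicative ℤ)) := by
  rw [ordK, dif_neg hx, neg_neg, ofAdd_toAdd, WithZero.coe_unzero]

lemma ordK_eq_of_val {x : K} (hx : x ≠ 0) {m : ℤ}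
    (h : v.valuation K x =
      ((Multiplicative.ofAdd (-m) : Multiplicative ℤ) : WithZero (Multiplicative ℤ))) :
    ordK v x = m := by
  rw [ordK_val_eq v hx] at h
  have := Multiplicative.ofAdd.injective (WithZero.coe_inj.mp h)
  omega

lemma ordK_mul {x y : K} (hx : x ≠ 0) (hy : y ≠ 0) :
    ordK v (x * y) = ordK v x + ordK v y := by
  refine ordK_eq_of_val v (mul_ne_zero hx hy) ?_
  rw [Valuation.map_mul, ordK_val_eq v hx, ordK_val_eq v hy, ← WithZero.coe_mul,
    ← ofAdd_add]
  ring_nf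

lemma ordK_neg {x : K} (hx : x ≠ 0) : ordK v (-x) = ordK v x := by
  refine ordK_eq_of_val v (neg_ne_zero.mpr hx) ?_
  rw [Valuation.map_neg, ordK_val_eq v hx]

lemma ordK_val_le_iff {x y : K} (hx : x ≠ 0) (hy : y ≠ 0) :
    v.valuation K x ≤ v.valuation K y ↔ ordK v y ≤ ordK v x := by
  rw [ordK_val_eq v hx, ordK_val_eq v hy, WithZero.coe_le_coe, Multiplicative.ofAdd_le,
    neg_le_neg_iff]

lemma min_le_ordK_add {x y : K} (hx : x ≠ 0) (hy : y ≠ 0) (hxy : x + y ≠ 0) :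
    min (ordK v x) (ordK v y) ≤ ordK v (x + y) := by
  have h := (v.valuation K).map_add x y
  rcases le_total (v.valuation K x) (v.valuation K y) with hle | hle
  · have : v.valuation K (x + y) ≤ v.valuation K y := le_trans h (by simp [hle])
    have := (ordK_val_le_iff v hxy hy).mp this
    exact le_trans (min_le_right _ _) this
  · have : v.valuation K (x + y) ≤ v.valuation K x := le_trans h (by simp [hle])
    have := (ordK_val_le_iff v hxy hx).mp this
    exact le_trans (min_le_left _ _) this

lemma ordK_add_of_ne {x y : K} (hx : x ≠ 0) (hy : y ≠ 0) (hxy : x + y ≠ 0)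
    (hne : ordK v x ≠ ordK v y) :
    ordK v (x + y) = min (ordK v x) (ordK v y) := by
  have hvne : v.valuation K x ≠ v.valuation K y := by
    intro h
    exact hne (ordK_eq_of_val v hx (h.trans (ordK_val_eq v hy)))
  have h := Valuation.map_add_of_distinct_val (v.valuation K) hvne
  rcases lt_or_gt_of_ne hne with hlt | hlt
  · have hvy : v.valuation K y ≤ v.valuation K x := (ordK_val_le_iff v hy hx).mpr hlt.le
    rw [max_eq_left hvy] at h
    rw [min_eq_left hlt.le]
    exact ordK_eq_of_val v hxy (h.trans (ordK_val_eq v hx))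
  · have hvx : v.valuation K x ≤ v.valuation K y := (ordK_val_le_iff v hx hy).mpr hlt.le
    rw [max_eq_right hvx] at h
    rw [min_eq_right hlt.le]
    exact ordK_eq_of_val v hxy (h.trans (ordK_val_eq v hy))

lemma ordK_nonneg {r : 𝓞 K} (hr : (r : K) ≠ 0) : 0 ≤ ordK v (r : K) := by
  have h := v.valuation_le_one (K := K) r
  rw [ordK_val_eq v hr] at h
  rw [show (1 : WithZero (Multiplicative ℤ)) =
      ((Multiplicative.ofAdd (0 : ℤ) : Multiplicative ℤ) : WithZero (Multiplicative ℤ)) by rfl]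
      at h
  rw [WithZero.coe_le_coe, Multiplicative.ofAdd_le] at h
  omega

lemma ordK_pos_iff {r : 𝓞 K} (hr : (r : K) ≠ 0) :
    0 < ordK v (r : K) ↔ r ∈ v.asIdeal := by
  have h := v.valuation_lt_one_iff_dvd (K := K) r
  rw [ordK_val_eq v hr, Ideal.dvd_span_singleton] at h
  rw [show (1 : WithZero (Multiplicative ℤ)) =
      ((Multiplicative.ofAdd (0 : ℤ) : Multiplicative ℤ) : WithZero (Multiplicative ℤ)) by rfl]
      at h
  rw [WithZero.coe_lt_coe, Multiplicative.ofAdd_lt] at h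
  constructor
  · intro hpos; exact h.mp (by omega)
  · intro hm; have := h.mpr hm; omega

lemma ordK_pow {x : K} (hx : x ≠ 0) (k : ℕ) : ordK v (x ^ k) = k * ordK v x := by
  induction k with
  | zero =>
    simp only [pow_zero, Nat.cast_zero, zero_mul]
    refine ordK_eq_of_val v one_ne_zero ?_
    rw [Valuation.map_one, neg_zero, ofAdd_zero, WithZero.coe_one]
  | succ k ih =>
    rw [pow_succ, ordK_mul v (pow_ne_zero k hx) hx, ih]
    push_cast; ring

end OrdAux

theorem valuations_of_a2_plus_b2_and_a2_minus_b2
    (K : Type*) [Field K] [NumberField K]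
    (Pt : HeightOneSpectrum (𝓞 K)) (hPt2 : (2 : 𝓞 K) ∈ Pt.asIdeal)
    (n : ℕ) (hn : 0 < n) (p : ℕ) (hp : p.Prime)
    (hp2 : (p : ℤ) > 2 * ordK Pt (2 : K))
    (hnord : ∀ q : HeightOneSpectrum (𝓞 K), (n : 𝓞 K) ∈ q.asIdeal →
      ordK q (n : K) < (p : ℤ))
    (a b c : 𝓞 K) (heq : a ^ 4 - b ^ 4 = (n : 𝓞 K) * c ^ p)
    (hnontriv : a * b * c ≠ 0) (hprim : Ideal.span {a, b, c} = ⊤)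
    (hc : c ∈ Pt.asIdeal) :
    ((ordK Pt ((a : K) ^ 2 + (b : K) ^ 2) = ordK Pt (2 : K) ∧
      ordK Pt ((a : K) ^ 2 - (b : K) ^ 2) =
        (p : ℤ) * ordK Pt (c : K) + ordK Pt (n : K) - ordK Pt (2 : K)) ∨
     (ordK Pt ((a : K) ^ 2 - (b : K) ^ 2) = ordK Pt (2 : K) ∧
      ordK Pt ((a : K) ^ 2 + (b : K) ^ 2) =
        (p : ℤ) * ordK Pt (c : K) + ordK Pt (n : K) - ordK Pt (2 : K))) ∧
    min (ordK Pt ((a : K) ^ 2 + (b : K) ^ 2)) (ordK Pt ((a : K) ^ 2 - (b : K) ^ 2)) =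
      ordK Pt (2 : K) := by
  -- nonzero elements
  have ha0 : a ≠ 0 := fun h => hnontriv (by simp [h])
  have hb0 : b ≠ 0 := fun h => hnontriv (by simp [h])
  have hc0 : c ≠ 0 := fun h => hnontriv (by simp [h])
  have haK : (a : K) ≠ 0 := RingOfIntegers.coe_ne_zero_iff.mpr ha0
  have hbK : (b : K) ≠ 0 := RingOfIntegers.coe_ne_zero_iff.mpr hb0
  have hcK : (c : K) ≠ 0 := RingOfIntegers.coe_ne_zero_iff.mpr hc0
  have hnK : (n : K) ≠ 0 := Nat.cast_ne_zero.mpr hn.ne'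
  have h2K : (2 : K) ≠ 0 := two_ne_zero
  have hA0 : ((a : K) ^ 2) ≠ 0 := pow_ne_zero 2 haK
  have hB0 : ((b : K) ^ 2) ≠ 0 := pow_ne_zero 2 hbK
  -- equation in K
  have hK : ((a : K) ^ 2 + (b : K) ^ 2) * ((a : K) ^ 2 - (b : K) ^ 2)
      = (n : K) * (c : K) ^ p := by
    have h := congrArg (algebraMap (𝓞 K) K) heq
    push_cast at h
    linear_combination h
  have hRHS : (n : K) * (c : K) ^ p ≠ 0 := mul_ne_zero hnK (pow_ne_zero p hcK)
  have hsum0 : (a : K) ^ 2 + (b : K) ^ 2 ≠ 0 := by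
    intro h; rw [h, zero_mul] at hK; exact hRHS hK.symm
  have hdiff0 : (a : K) ^ 2 - (b : K) ^ 2 ≠ 0 := by
    intro h; rw [h, mul_zero] at hK; exact hRHS hK.symm
  -- neither a nor b lies in Pt
  have hPrime : Pt.asIdeal.IsPrime := Pt.isPrime
  have hcpow : c ^ p ∈ Pt.asIdeal := by
    have : 0 < p := hp.pos
    have hcp : c ^ p = c ^ (p - 1) * c := by rw [← pow_succ]; congr 1; omega
    rw [hcp]
    exact Ideal.mul_mem_left _ _ hc
  have hnotboth : ¬ (a ∈ Pt.asIdeal ∧ b ∈ Pt.asIdeal) := by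
    rintro ⟨haP, hbP⟩
    have : Ideal.span {a, b, c} ≤ Pt.asIdeal := by
      rw [Ideal.span_le]
      rintro x hx
      simp only [Set.mem_insert_iff, Set.mem_singleton_iff] at hx
      rcases hx with rfl | rfl | rfl
      · exact haP
      · exact hbP
      · exact hc
    rw [hprim] at this
    exact hPrime.ne_top (top_le_iff.mp this)
  have haP : a ∉ Pt.asIdeal := by
    intro haP
    refine hnotboth ⟨haP, ?_⟩
    have hb4 : b ^ 4 ∈ Pt.asIdeal := by
      have : b ^ 4 = a ^ 4 - (n : 𝓞 K) * c ^ p := by linear_combination -heq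
      rw [this]
      exact Ideal.sub_mem _ (Ideal.pow_mem_of_mem _ haP 4 (by norm_num))
        (Ideal.mul_mem_left _ _ hcpow)
    exact hPrime.mem_of_pow_mem 4 hb4
  have hbP : b ∉ Pt.asIdeal := by
    intro hbP
    refine hnotboth ⟨?_, hbP⟩
    have ha4 : a ^ 4 ∈ Pt.asIdeal := by
      have : a ^ 4 = b ^ 4 + (n : 𝓞 K) * c ^ p := by linear_combination heq
      rw [this]
      exact Ideal.add_mem _ (Ideal.pow_mem_of_mem _ hbP 4 (by norm_num))
        (Ideal.mul_mem_left _ _ hcpow)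
    exact hPrime.mem_of_pow_mem 4 ha4
  -- basic valuations
  have hoa : ordK Pt (a : K) = 0 := by
    have h1 := ordK_nonneg Pt haK
    have h2 := (ordK_pos_iff Pt haK).not.mpr haP
    omega
  have hob : ordK Pt (b : K) = 0 := by
    have h1 := ordK_nonneg Pt hbK
    have h2 := (ordK_pos_iff Pt hbK).not.mpr hbP
    omega
  have h2coe : ((2 : 𝓞 K) : K) = (2 : K) := by
    rw [RingOfIntegers.coe_eq_algebraMap]; exact map_ofNat _ 2
  have h2Kne : ((2 : 𝓞 K) : K) ≠ 0 := by rw [h2coe]; exact h2K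
  have he_pos : 0 < ordK Pt (2 : K) := by
    have := (ordK_pos_iff Pt h2Kne).mpr hPt2
    rwa [h2coe] at this
  have hncoe : ((n : 𝓞 K) : K) = (n : K) := by push_cast; ring
  have hnKne : ((n : 𝓞 K) : K) ≠ 0 := by rw [hncoe]; exact hnK
  have hon : 0 ≤ ordK Pt (n : K) := by
    have := ordK_nonneg Pt hnKne
    rwa [hncoe] at this
  have hoc : 0 < ordK Pt (c : K) := (ordK_pos_iff Pt hcK).mpr hc
  set e := ordK Pt (2 : K) with he_def
  set s := ordK Pt ((a : K) ^ 2 + (b : K) ^ 2) with hs_def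
  set d := ordK Pt ((a : K) ^ 2 - (b : K) ^ 2) with hd_def
  set oc := ordK Pt (c : K) with hoc_def
  set onn := ordK Pt (n : K) with honn_def
  -- total valuation
  have htot : s + d = (p : ℤ) * oc + onn := by
    have h1 : ordK Pt (((a : K) ^ 2 + (b : K) ^ 2) * ((a : K) ^ 2 - (b : K) ^ 2)) = s + d :=
      ordK_mul Pt hsum0 hdiff0
    have h2 : ordK Pt ((n : K) * (c : K) ^ p) = onn + (p : ℤ) * oc := by
      rw [ordK_mul Pt hnK (pow_ne_zero p hcK), ordK_pow Pt hcK p]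
    rw [hK] at h1
    omega
  -- valuations of 2a^2 and 2b^2
  have hord2A : ordK Pt (2 * (a : K) ^ 2) = e := by
    rw [ordK_mul Pt h2K hA0, ordK_pow Pt haK 2, hoa]
    ring
  have hord2B : ordK Pt (2 * (b : K) ^ 2) = e := by
    rw [ordK_mul Pt h2K hB0, ordK_pow Pt hbK 2, hob]
    ring
  have h2A0 : (2 : K) * (a : K) ^ 2 ≠ 0 := mul_ne_zero h2K hA0
  have h2B0 : (2 : K) * (b : K) ^ 2 ≠ 0 := mul_ne_zero h2K hB0
  -- s + d ≥ p
  have hsd_ge : (p : ℤ) ≤ s + d := by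
    have : (p : ℤ) * 1 ≤ (p : ℤ) * oc := by
      have hp0 : (0 : ℤ) ≤ (p : ℤ) := Int.natCast_nonneg p
      exact mul_le_mul_of_nonneg_left (by omega) hp0
    omega
  -- min s d ≤ e
  have hmin_le : min s d ≤ e := by
    have hsumrw : ((a : K) ^ 2 + (b : K) ^ 2) + ((a : K) ^ 2 - (b : K) ^ 2)
        = 2 * (a : K) ^ 2 := by ring
    have := min_le_ordK_add Pt hsum0 hdiff0 (by rw [hsumrw]; exact h2A0)
    rw [hsumrw, hord2A] at this
    exact this
  have hneg_diff : (-((a : K) ^ 2 - (b : K) ^ 2)) ≠ 0 := neg_ne_zero.mpr hdiff0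
  have hodneg : ordK Pt (-((a : K) ^ 2 - (b : K) ^ 2)) = d := ordK_neg Pt hdiff0
  have hdiffrw : ((a : K) ^ 2 + (b : K) ^ 2) + (-((a : K) ^ 2 - (b : K) ^ 2))
      = 2 * (b : K) ^ 2 := by ring
  -- s ≥ e
  have hs_ge : e ≤ s := by
    by_contra hlt
    push_neg at hlt
    have hd_gt : e < d := by omega
    have hne : s ≠ d := by omega
    have := ordK_add_of_ne Pt hsum0 hneg_diff (by rw [hdiffrw]; exact h2B0)
      (by rw [hodneg]; exact hne)
    rw [hdiffrw, hord2B, hodneg] at this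
    omega
  -- d ≥ e
  have hd_ge : e ≤ d := by
    by_contra hlt
    push_neg at hlt
    have hs_gt : e < s := by omega
    have hne : s ≠ d := by omega
    have := ordK_add_of_ne Pt hsum0 hneg_diff (by rw [hdiffrw]; exact h2B0)
      (by rw [hodneg]; exact hne)
    rw [hdiffrw, hord2B, hodneg] at this
    omega
  have hne_sd : s ≠ d := by
    intro h
    have : min s d ≥ e := le_min hs_ge hd_ge
    omega
  rcases lt_or_gt_of_ne hne_sd with hlt | hlt
  · have hs_eq : s = e := by omega
    refine ⟨Or.inl ⟨hs_eq, by omega⟩, by omega⟩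
  · have hd_eq : d = e := by omega
    refine ⟨Or.inr ⟨hd_eq, by omega⟩, by omega⟩
end

section
/- Let p ≥ 5 be a rational prime and let G be a subgroup of GL₂(𝔽_p) whose order is divisible by p. Then either there exists a one-dimensional 𝔽_p-subspace of 𝔽_p² that is stable under every element of G, or G contains SL₂(𝔽_p). -/
open Matrix Polynomial

/-- A matrix of `p`-power order over `ZMod p` is unipotent. -/
lemma unip_sq (p : ℕ) [Fact p.Prime] (M : Matrix (Fin 2) (Fin 2) (ZMod p))
    (hM : M ^ p = 1) : (M - 1) ^ 2 = 0 := by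
  have hint : IsIntegral (ZMod p) M := IsIntegral.of_finite (ZMod p) M
  have haev : (aeval M) ((X - C 1 : (ZMod p)[X]) ^ p) = 0 := by
    have : (X - C 1 : (ZMod p)[X]) ^ p = X ^ p - C 1 ^ p := sub_pow_char _ _
    rw [this]
    simp [hM]
  have hdvd : minpoly (ZMod p) M ∣ (X - C 1 : (ZMod p)[X]) ^ p := minpoly.dvd _ _ haev
  have hprime : Prime (X - C 1 : (ZMod p)[X]) := (Polynomial.irreducible_X_sub_C 1).prime
  obtain ⟨i, hip, hassoc⟩ := (dvd_prime_pow hprime p).mp hdvd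
  have hmon : (minpoly (ZMod p) M).Monic := minpoly.monic hint
  have heq : minpoly (ZMod p) M = (X - C 1 : (ZMod p)[X]) ^ i :=
    Polynomial.eq_of_monic_of_associated hmon ((monic_X_sub_C 1).pow _) hassoc
  have hi2 : i ≤ 2 := by
    have h1 : (minpoly (ZMod p) M).natDegree ≤ M.charpoly.natDegree :=
      Polynomial.natDegree_le_of_dvd (Matrix.minpoly_dvd_charpoly M) M.charpoly_monic.ne_zero
    rw [M.charpoly_natDegree_eq_dim, heq] at h1
    rw [natDegree_pow, natDegree_X_sub_C, mul_one] at h1; exact h1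
  have hMi : (M - 1) ^ i = 0 := by
    have := minpoly.aeval (ZMod p) M
    rw [heq] at this
    simpa using this
  have : (M - 1) ^ 2 = (M - 1) ^ (2 - i) * (M - 1) ^ i := by
    rw [← pow_add, Nat.sub_add_cancel hi2]
  rw [this, hMi, mul_zero]

/-- Powers of a unipotent matrix. -/
lemma unip_pow {R : Type*} [CommRing R] (K : Matrix (Fin 2) (Fin 2) R) (hK : K * K = 0) :
    ∀ n : ℕ, (1 + K) ^ n = 1 + (n : R) • K := by
  intro n
  induction n with
  | zero => simp
  | succ n ih =>
    rw [pow_succ, ih]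
    push_cast
    rw [add_smul, one_smul]
    rw [mul_add, mul_one, add_mul, one_mul, smul_mul_assoc, hK, smul_zero, add_zero]
    abel

/-- The kernel of a nonzero square-zero 2×2 matrix is the span of any nonzero
element of the kernel. -/
lemma ker_lem (p : ℕ) [Fact p.Prime] (K : Matrix (Fin 2) (Fin 2) (ZMod p)) (hK : K ≠ 0)
    (u : Fin 2 → ZMod p) (hu : u ≠ 0) (hKu : K.mulVec u = 0) :
    ∀ x, K.mulVec x = 0 → ∃ a : ZMod p, x = a • u := by
  set W : Submodule (ZMod p) (Fin 2 → ZMod p) := Submodule.span (ZMod p) {u}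
  set Kk : Submodule (ZMod p) (Fin 2 → ZMod p) := LinearMap.ker K.mulVecLin
  have hle : W ≤ Kk := by
    rw [Submodule.span_le, Set.singleton_subset_iff]
    simpa [Kk, Matrix.mulVecLin] using hKu
  have hne : Kk ≠ ⊤ := by
    intro h
    apply hK
    ext i j
    have h2 : K.mulVec (Pi.single j 1) = 0 := by
      have : (Pi.single j 1 : Fin 2 → ZMod p) ∈ Kk := h ▸ Submodule.mem_top
      simpa [Kk, Matrix.mulVecLin] using this
    have := congrFun h2 i
    simpa [Matrix.mulVec_single] using this
  have hfr : Module.finrank (ZMod p) Kk ≤ 1 := by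
    have := Submodule.finrank_lt (K := ZMod p) (V := Fin 2 → ZMod p)
      hne
    rw [Module.finrank_fin_fun] at this
    omega
  have hW1 : Module.finrank (ZMod p) W = 1 := finrank_span_singleton hu
  have heq : W = Kk := Submodule.eq_of_le_of_finrank_le hle (hW1 ▸ hfr)
  intro x hx
  have : x ∈ W := by
    rw [heq]
    simpa [Kk, Matrix.mulVecLin] using hx
  obtain ⟨a, ha⟩ := Submodule.mem_span_singleton.mp this
  exact ⟨a, ha.symm⟩

/-- Factorization of a determinant-one 2×2 matrix into elementary matrices. -/
lemma sl2_factor {F : Type*} [Field F] (S : Matrix (Fin 2) (Fin 2) F) (hS : S.det = 1) :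
    ∃ y₁ x₁ y₂ x₂ : F,
      S = !![1,0;y₁,1] * !![1,x₁;0,1] * !![1,0;y₂,1] * !![1,x₂;0,1] := by
  rw [Matrix.det_fin_two] at hS
  rcases eq_or_ne (S 1 0) 0 with hc | hc
  · have ha : S 0 0 ≠ 0 := by
      intro h; rw [h, hc] at hS; simp at hS
    refine ⟨-1, (S 0 0 - 1) / S 0 0, S 0 0, (S 0 1 + S 1 1 - 1) / S 0 0, ?_⟩
    have hd : S 0 0 * S 1 1 = 1 := by rw [hc] at hS; linear_combination hS
    rw [Matrix.eta_fin_two S]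
    ext i j
    fin_cases i <;> fin_cases j <;>
      simp [Matrix.mul_apply, Fin.sum_univ_two, hc] <;> field_simp <;> ring_nf <;>
      first
        | linear_combination -hd
        | linear_combination hd
        | linear_combination hS
  · refine ⟨0, (S 0 0 - 1) / S 1 0, S 1 0, (S 1 1 - 1) / S 1 0, ?_⟩
    rw [Matrix.eta_fin_two S]
    ext i j
    fin_cases i <;> fin_cases j <;>
      simp [Matrix.mul_apply, Fin.sum_univ_two] <;> field_simp <;> ring_nf <;>
      first
        | linear_combination hS
        | linear_combination -hS

/-- Two vectors of which the second is not a multiple of the first give an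
invertible 2×2 matrix. -/
lemma det_ne (F : Type*) [Field F] (v₁ v₂ : Fin 2 → F) (h1 : v₁ ≠ 0)
    (h2 : ∀ a : F, v₂ ≠ a • v₁) :
    v₁ 0 * v₂ 1 - v₂ 0 * v₁ 1 ≠ 0 := by
  intro hdet
  rcases eq_or_ne (v₁ 0) 0 with h0 | h0
  · rcases eq_or_ne (v₁ 1) 0 with h1' | h1'
    · apply h1
      ext i; fin_cases i <;> simp [h0, h1']
    · apply h2 (v₂ 1 / v₁ 1)
      rw [funext_iff, Fin.forall_fin_two]
      refine ⟨?_, ?_⟩ <;> simp [Pi.smul_apply, smul_eq_mul]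
      · field_simp
        first
          | linear_combination -hdet
          | linear_combination hdet
          | linear_combination -hdet - v₂ 1 * h0
          | linear_combination -hdet + v₂ 1 * h0
          | linear_combination -v₂ 1 * h0
          | linear_combination v₂ 1 * h0
      · field_simp
  · apply h2 (v₂ 0 / v₁ 0)
    rw [funext_iff, Fin.forall_fin_two]
    refine ⟨?_, ?_⟩ <;> simp [Pi.smul_apply, smul_eq_mul]
    · field_simp
    · field_simp
      first
        | linear_combination -hdet
        | linear_combination hdet
        | linear_combination 2 * hdet
        | linear_combination -2 * hdet

theorem subgroup_of_GL2_with_order_divisible_by_p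
    (p : ℕ) (hp : p.Prime) (hp5 : 5 ≤ p)
    (G : Subgroup (GL (Fin 2) (ZMod p))) (hG : p ∣ Nat.card G) :
    (∃ W : Submodule (ZMod p) (Fin 2 → ZMod p),
      Module.finrank (ZMod p) W = 1 ∧
      ∀ g ∈ G, ∀ x ∈ W,
        Matrix.mulVec (g : Matrix (Fin 2) (Fin 2) (ZMod p)) x ∈ W) ∨
    (∀ g : GL (Fin 2) (ZMod p),
      (g : Matrix (Fin 2) (Fin 2) (ZMod p)).det = 1 → g ∈ G) := by
  haveI := Fact.mk hp
  by_cases hleft : (∃ W : Submodule (ZMod p) (Fin 2 → ZMod p),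
      Module.finrank (ZMod p) W = 1 ∧
      ∀ g ∈ G, ∀ x ∈ W,
        Matrix.mulVec (g : Matrix (Fin 2) (Fin 2) (ZMod p)) x ∈ W)
  · exact Or.inl hleft
  right
  -- no stable line
  have hnostab : ∀ v : Fin 2 → ZMod p, v ≠ 0 →
      ∃ h ∈ G, ∀ a : ZMod p,
        Matrix.mulVec (h : Matrix (Fin 2) (Fin 2) (ZMod p)) v ≠ a • v := by
    intro v hv
    by_contra hcon
    push_neg at hcon
    apply hleft
    refine ⟨Submodule.span (ZMod p) {v}, finrank_span_singleton hv, ?_⟩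
    intro g hg x hx
    obtain ⟨b, hb⟩ := Submodule.mem_span_singleton.mp hx
    obtain ⟨a, ha⟩ := hcon g hg
    rw [← hb, Matrix.mulVec_smul, ha]
    exact Submodule.smul_mem _ _ (Submodule.smul_mem _ _ (Submodule.mem_span_singleton_self v))
  -- Cauchy: element of order p
  haveI : Fintype G := Fintype.ofFinite G
  rw [Nat.card_eq_fintype_card] at hG
  obtain ⟨u₀, hu₀⟩ := exists_prime_orderOf_dvd_card p hG
  obtain ⟨u, hu_def⟩ : ∃ u : GL (Fin 2) (ZMod p), u = (u₀ : GL (Fin 2) (ZMod p)) := ⟨_, rfl⟩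
  have huG : u ∈ G := by rw [hu_def]; exact u₀.2
  have hord : orderOf u = p := by
    rw [hu_def]
    exact (orderOf_injective G.subtype Subtype.coe_injective u₀).trans hu₀
  have hup : u ^ p = 1 := by
    have hdvd : orderOf u ∣ p := by rw [hord]
    exact orderOf_dvd_iff_pow_eq_one.mp hdvd
  have hune : u ≠ 1 := by
    intro h
    rw [h, orderOf_one] at hord
    omega
  obtain ⟨M, hM_def⟩ : ∃ M, M = (u : Matrix (Fin 2) (Fin 2) (ZMod p)) := ⟨_, rfl⟩
  have hMp : M ^ p = 1 := by
    have h2 : ((u ^ p : GL (Fin 2) (ZMod p)) : Matrix (Fin 2) (Fin 2) (ZMod p)) = M ^ p := by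
      rw [hM_def]; exact Units.val_pow_eq_pow_val u p
    rw [hup] at h2
    simpa using h2.symm
  have hMne : M ≠ 1 := fun hcontra => hune (Units.ext (by rw [← hM_def, hcontra]; rfl))
  obtain ⟨N, hN_def⟩ : ∃ N, N = M - 1 := ⟨_, rfl⟩
  have hN2 : N * N = 0 := by
    have := unip_sq p M hMp
    rw [pow_two] at this
    rw [hN_def]
    exact this
  have hNne : N ≠ 0 := by rw [hN_def]; exact sub_ne_zero.mpr hMne
  have hM1N : M = 1 + N := by rw [hN_def]; abel
  -- v₁ spanning the kernel = range of N
  obtain ⟨w, hw⟩ : ∃ w, N.mulVec w ≠ 0 := by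
    by_contra hcw
    push_neg at hcw
    apply hNne
    ext i j
    have := congrFun (hcw (Pi.single j 1)) i
    simpa [Matrix.mulVec_single] using this
  obtain ⟨v₁, hv₁_def⟩ : ∃ v₁, v₁ = N.mulVec w := ⟨_, rfl⟩
  have hv₁ : v₁ ≠ 0 := by rw [hv₁_def]; exact hw
  have hNv₁ : N.mulVec v₁ = 0 := by
    rw [hv₁_def, Matrix.mulVec_mulVec, hN2, Matrix.zero_mulVec]
  have hker : ∀ x, N.mulVec x = 0 → ∃ a : ZMod p, x = a • v₁ :=
    ker_lem p N hNne v₁ hv₁ hNv₁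
  have hrange : ∀ x, ∃ a : ZMod p, N.mulVec x = a • v₁ := by
    intro x
    exact hker _ (by rw [Matrix.mulVec_mulVec, hN2, Matrix.zero_mulVec])
  -- the conjugating element h
  obtain ⟨h, hhG, hhv⟩ := hnostab v₁ hv₁
  obtain ⟨hM, hhM_def⟩ : ∃ hM, hM = (h : Matrix (Fin 2) (Fin 2) (ZMod p)) := ⟨_, rfl⟩
  obtain ⟨hMi, hhMi_def⟩ :
      ∃ hMi, hMi = ((h⁻¹ : GL (Fin 2) (ZMod p)) : Matrix (Fin 2) (Fin 2) (ZMod p)) := ⟨_, rfl⟩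
  have hinv1 : hM * hMi = 1 := by
    rw [hhM_def, hhMi_def, ← Units.val_mul, mul_inv_cancel, Units.val_one]
  have hinv2 : hMi * hM = 1 := by
    rw [hhM_def, hhMi_def, ← Units.val_mul, inv_mul_cancel, Units.val_one]
  obtain ⟨v₂, hv₂_def⟩ : ∃ v₂, v₂ = hM.mulVec v₁ := ⟨_, rfl⟩
  have hhv' : ∀ a : ZMod p, v₂ ≠ a • v₁ := by
    intro a hcontra
    exact hhv a (by rw [← hhM_def, ← hv₂_def, hcontra])
  have hv₂ne : v₂ ≠ 0 := by
    intro h0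
    exact hhv' 0 (by rw [h0, zero_smul])
  -- c
  obtain ⟨c, hc⟩ := hrange v₂
  have hcne : c ≠ 0 := by
    intro h0
    rw [h0, zero_smul] at hc
    obtain ⟨a, ha⟩ := hker v₂ hc
    exact hhv' a ha
  -- N' and c'
  obtain ⟨N', hN'_def⟩ : ∃ N', N' = hM * N * hMi := ⟨_, rfl⟩
  have hN'2 : N' * N' = 0 := by
    have e : N' * N' = hM * (N * (hMi * hM) * N) * hMi := by
      rw [hN'_def]; noncomm_ring
    rw [e, hinv2, mul_one, hN2, mul_zero, zero_mul]
  have hN'ne : N' ≠ 0 := by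
    intro h0
    apply hNne
    have e : N = hMi * N' * hM := by
      rw [hN'_def, ← mul_assoc, ← mul_assoc, hinv2, one_mul, mul_assoc, hinv2, mul_one]
    rw [e, h0, mul_zero, zero_mul]
  have hN'v₂ : N'.mulVec v₂ = 0 := by
    rw [hv₂_def, Matrix.mulVec_mulVec, hN'_def, mul_assoc, hinv2, mul_one,
      ← Matrix.mulVec_mulVec, hNv₁, Matrix.mulVec_zero]
  have hker' : ∀ x, N'.mulVec x = 0 → ∃ a : ZMod p, x = a • v₂ :=
    ker_lem p N' hN'ne v₂ hv₂ne hN'v₂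
  have hrange' : ∀ x, ∃ a : ZMod p, N'.mulVec x = a • v₂ := by
    intro x
    exact hker' _ (by rw [Matrix.mulVec_mulVec, hN'2, Matrix.zero_mulVec])
  obtain ⟨c', hc'⟩ := hrange' v₁
  have hc'ne : c' ≠ 0 := by
    intro h0
    rw [h0, zero_smul] at hc'
    obtain ⟨a, ha⟩ := hker' v₁ hc'
    have hane : a ≠ 0 := by
      intro h1
      rw [h1, zero_smul] at ha
      exact hv₁ ha
    apply hhv' a⁻¹
    rw [ha, smul_smul, inv_mul_cancel₀ hane, one_smul]
  -- the base-change matrix P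
  obtain ⟨P, hP_def⟩ :
      ∃ P : Matrix (Fin 2) (Fin 2) (ZMod p),
        P = Matrix.of (fun i j => ![v₁, v₂] j i) := ⟨_, rfl⟩
  have hP00 : P 0 0 = v₁ 0 := by rw [hP_def]; rfl
  have hP01 : P 0 1 = v₂ 0 := by rw [hP_def]; rfl
  have hP10 : P 1 0 = v₁ 1 := by rw [hP_def]; rfl
  have hP11 : P 1 1 = v₂ 1 := by rw [hP_def]; rfl
  have hPdet : P.det ≠ 0 := by
    rw [Matrix.det_fin_two, hP00, hP01, hP10, hP11]
    have := det_ne (ZMod p) v₁ v₂ hv₁ hhv'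
    intro h0
    apply this
    linear_combination h0
  have hPunit : IsUnit P.det := isUnit_iff_ne_zero.mpr hPdet
  -- column computations
  have hcol0 : ∀ i, N i 0 * v₁ 0 + N i 1 * v₁ 1 = 0 := by
    intro i
    have := congrFun hNv₁ i
    simpa [Matrix.mulVec, dotProduct, Fin.sum_univ_two] using this
  have hcol1 : ∀ i, N i 0 * v₂ 0 + N i 1 * v₂ 1 = c * v₁ i := by
    intro i
    have := congrFun hc i
    simpa [Matrix.mulVec, dotProduct, Fin.sum_univ_two] using this
  have hcol0' : ∀ i, N' i 0 * v₁ 0 + N' i 1 * v₁ 1 = c' * v₂ i := by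
    intro i
    have := congrFun hc' i
    simpa [Matrix.mulVec, dotProduct, Fin.sum_univ_two] using this
  have hcol1' : ∀ i, N' i 0 * v₂ 0 + N' i 1 * v₂ 1 = 0 := by
    intro i
    have := congrFun hN'v₂ i
    simpa [Matrix.mulVec, dotProduct, Fin.sum_univ_two] using this
  have hPe : N * P = P * !![0,c;0,0] := by
    ext i j
    fin_cases j <;>
      simp [Matrix.mul_apply, Fin.sum_univ_two, hP_def]
    · linear_combination hcol0 i
    · linear_combination hcol1 i
  have hPf : N' * P = P * !![0,0;c',0] := by
    ext i j
    fin_cases j <;>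
      simp [Matrix.mul_apply, Fin.sum_univ_two, hP_def]
    · linear_combination hcol0' i
    · linear_combination hcol1' i
  -- conjugation identities
  have hE : ∀ x : ZMod p, (1 + (x * c⁻¹) • N) * P = P * !![1,x;0,1] := by
    intro x
    have h1 : (!![1,x;0,1] : Matrix (Fin 2) (Fin 2) (ZMod p))
        = 1 + (x * c⁻¹) • !![0,c;0,0] := by
      ext i j
      fin_cases i <;> fin_cases j <;>
        simp [Matrix.one_apply] <;> field_simp
    calc (1 + (x * c⁻¹) • N) * P = P + (x * c⁻¹) • (N * P) := by
          rw [add_mul, one_mul, smul_mul_assoc]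
      _ = P + (x * c⁻¹) • (P * !![0,c;0,0]) := by rw [hPe]
      _ = P * (1 + (x * c⁻¹) • !![0,c;0,0]) := by rw [mul_add, mul_one, mul_smul_comm]
      _ = P * !![1,x;0,1] := by rw [← h1]
  have hF : ∀ y : ZMod p, (1 + (y * c'⁻¹) • N') * P = P * !![1,0;y,1] := by
    intro y
    have h1 : (!![1,0;y,1] : Matrix (Fin 2) (Fin 2) (ZMod p))
        = 1 + (y * c'⁻¹) • !![0,0;c',0] := by
      ext i j
      fin_cases i <;> fin_cases j <;>
        simp [Matrix.one_apply] <;> field_simp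
    calc (1 + (y * c'⁻¹) • N') * P = P + (y * c'⁻¹) • (N' * P) := by
          rw [add_mul, one_mul, smul_mul_assoc]
      _ = P + (y * c'⁻¹) • (P * !![0,0;c',0]) := by rw [hPf]
      _ = P * (1 + (y * c'⁻¹) • !![0,0;c',0]) := by rw [mul_add, mul_one, mul_smul_comm]
      _ = P * !![1,0;y,1] := by rw [← h1]
  -- membership of unipotent one-parameter subgroups
  have hEmem : ∀ t : ZMod p, ∃ gE ∈ G,
      (gE : Matrix (Fin 2) (Fin 2) (ZMod p)) = 1 + t • N := by
    intro t
    refine ⟨u ^ t.val, pow_mem huG _, ?_⟩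
    have hval : ((u ^ t.val : GL (Fin 2) (ZMod p)) : Matrix (Fin 2) (Fin 2) (ZMod p))
        = M ^ t.val := by rw [hM_def]; exact Units.val_pow_eq_pow_val u t.val
    rw [hval, hM1N, unip_pow N hN2]
    congr 1
    rw [ZMod.natCast_val, ZMod.cast_id]
  have hFmem : ∀ t : ZMod p, ∃ gF ∈ G,
      (gF : Matrix (Fin 2) (Fin 2) (ZMod p)) = 1 + t • N' := by
    intro t
    refine ⟨h * u ^ t.val * h⁻¹, mul_mem (mul_mem hhG (pow_mem huG _)) (inv_mem hhG), ?_⟩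
    obtain ⟨gE, _, hgE⟩ := hEmem t
    have hval : ((h * u ^ t.val * h⁻¹ : GL (Fin 2) (ZMod p)) :
        Matrix (Fin 2) (Fin 2) (ZMod p)) = hM * (M ^ t.val) * hMi := by
      rw [Units.val_mul, Units.val_mul, Units.val_pow_eq_pow_val,
        ← hM_def, ← hhM_def, ← hhMi_def]
    rw [hval, hM1N, unip_pow N hN2]
    have hcast : ((t.val : ℕ) : ZMod p) = t := by rw [ZMod.natCast_val, ZMod.cast_id]
    rw [hcast]
    rw [mul_add, mul_one, add_mul, hinv1, mul_smul_comm, smul_mul_assoc, hN'_def]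
  -- main argument
  intro g₀ hg₀
  obtain ⟨S, hS_def⟩ :
      ∃ S, S = P⁻¹ * (g₀ : Matrix (Fin 2) (Fin 2) (ZMod p)) * P := ⟨_, rfl⟩
  have hSdet : S.det = 1 := by
    rw [hS_def, Matrix.det_mul, Matrix.det_mul, Matrix.det_nonsing_inv, hg₀,
      Ring.inverse_eq_inv']
    field_simp
  obtain ⟨y₁, x₁, y₂, x₂, hfac⟩ := sl2_factor S hSdet
  obtain ⟨gF₁, hgF₁G, hgF₁⟩ := hFmem (y₁ * c'⁻¹)
  obtain ⟨gE₁, hgE₁G, hgE₁⟩ := hEmem (x₁ * c⁻¹)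
  obtain ⟨gF₂, hgF₂G, hgF₂⟩ := hFmem (y₂ * c'⁻¹)
  obtain ⟨gE₂, hgE₂G, hgE₂⟩ := hEmem (x₂ * c⁻¹)
  have step : ∀ {A B : Matrix (Fin 2) (Fin 2) (ZMod p)}
      (C : Matrix (Fin 2) (Fin 2) (ZMod p)),
      A * P = P * B → A * (P * C) = P * (B * C) := by
    intro A B C hAB
    rw [← mul_assoc, hAB, mul_assoc]
  have key : (g₀ : Matrix (Fin 2) (Fin 2) (ZMod p)) * P
      = ((gF₁ * gE₁ * gF₂ * gE₂ : GL (Fin 2) (ZMod p)) :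
          Matrix (Fin 2) (Fin 2) (ZMod p)) * P := by
    have hg₀P : (g₀ : Matrix (Fin 2) (Fin 2) (ZMod p)) * P = P * S := by
      rw [hS_def, ← mul_assoc, ← mul_assoc, Matrix.mul_nonsing_inv _ hPunit, one_mul]
    rw [hg₀P, hfac]
    rw [Units.val_mul, Units.val_mul, Units.val_mul, hgF₁, hgE₁, hgF₂, hgE₂]
    simp only [mul_assoc]
    rw [hE x₂, step _ (hF y₂), step _ (hE x₁), step _ (hF y₁)]
  have hgeq : g₀ = gF₁ * gE₁ * gF₂ * gE₂ := by
    apply Units.ext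
    exact (Matrix.isUnit_iff_isUnit_det P).mpr hPunit |>.mul_right_cancel key
  rw [hgeq]
  exact mul_mem (mul_mem (mul_mem hgF₁G hgE₁G) hgF₂G) hgE₂G
end

section
/- Let K be a number field in which 3 splits completely, and let S be a finite set of prime ideals of O_K disjoint from the set of primes above 3. Let (λ, μ) be a solution of the S-unit equation λ + μ = 1 with λ, μ ∈ O_K. Then λ ≡ −1 (mod 3O_K) and μ ≡ −1 (mod 3O_K). -/
open NumberField IsDedekindDomain

/-- If `ord_v(a) = 0` for `a ∈ 𝓞 K`, then `a ∉ v`. -/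
lemma not_mem_of_ordK_eq_zero {K : Type*} [Field K] [NumberField K]
    (v : HeightOneSpectrum (𝓞 K)) (a : 𝓞 K) (ha : (a : K) ≠ 0)
    (h : ordK v (a : K) = 0) : a ∉ v.asIdeal := by
  have hval : v.valuation K ((a : K)) = 1 := by
    unfold ordK at h
    rw [dif_neg ha, neg_eq_zero] at h
    have := WithZero.coe_unzero ((v.valuation K).ne_zero_iff.mpr ha)
    rw [← this]
    have : WithZero.unzero ((v.valuation K).ne_zero_iff.mpr ha) = 1 := by
      have := Multiplicative.toAdd.injective (h.trans (toAdd_one).symm)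
      exact this
    rw [this]; rfl
  intro hmem
  have hdvd : v.asIdeal ∣ Ideal.span {a} := Ideal.dvd_span_singleton.mpr hmem
  have hlt : v.valuation K (algebraMap (𝓞 K) K a) < 1 :=
    (HeightOneSpectrum.valuation_lt_one_iff_dvd (K := K) v a).mpr hdvd
  rw [show algebraMap (𝓞 K) K a = (a : K) from rfl, hval] at hlt
  exact lt_irrefl _ hlt

set_option maxHeartbeats 1000000 in
set_option synthInstance.maxHeartbeats 1000000 in
/-- Key local step: if the residue field at `v` has 3 elements, `a, b ∉ v`, and
`a + b = 1`, then `a + 1 ∈ v`. -/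
lemma key_local {K : Type*} [Field K] [NumberField K]
    (v : HeightOneSpectrum (𝓞 K)) (hcard : Nat.card ((𝓞 K) ⧸ v.asIdeal) = 3)
    (h3 : (3 : 𝓞 K) ∈ v.asIdeal) (a b : 𝓞 K)
    (hav : a ∉ v.asIdeal) (hbv : b ∉ v.asIdeal) (hab : a + b = 1) :
    a + 1 ∈ v.asIdeal := by
  classical
  set Q := (𝓞 K) ⧸ v.asIdeal
  have : Finite Q := Nat.finite_of_card_ne_zero (by rw [hcard]; norm_num)
  have : Fintype Q := Fintype.ofFinite Q
  have hQ3 : (3 : Q) = 0 := by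
    have : ((Ideal.Quotient.mk v.asIdeal) (3 : 𝓞 K)) = 0 :=
      Ideal.Quotient.eq_zero_iff_mem.mpr h3
    rw [map_ofNat] at this; exact this
  have h10 : (1 : Q) ≠ 0 := by
    intro h
    have : Subsingleton Q := subsingleton_of_zero_eq_one h.symm
    have h1 : Fintype.card Q ≤ 1 := Fintype.card_le_one_iff_subsingleton.mpr this
    rw [Nat.card_eq_fintype_card] at hcard
    omega
  have h20 : (2 : Q) ≠ 0 := by
    intro h; apply h10; linear_combination hQ3 - h
  have h12 : (1 : Q) ≠ 2 := by
    intro h; apply h10; linear_combination hQ3 + 2 * h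
  have huniv : ({0, 1, 2} : Finset Q) = Finset.univ := by
    apply Finset.eq_univ_of_card
    rw [← Nat.card_eq_fintype_card, hcard]
    rw [Finset.card_insert_of_notMem (by simp [h10.symm, Ne.symm h20]),
      Finset.card_insert_of_notMem (by simp [h12]), Finset.card_singleton]
  set abar := (Ideal.Quotient.mk v.asIdeal) a with habar
  set bbar := (Ideal.Quotient.mk v.asIdeal) b with hbbar
  have ha0 : abar ≠ 0 := fun h => hav (Ideal.Quotient.eq_zero_iff_mem.mp h)
  have hb0 : bbar ≠ 0 := fun h => hbv (Ideal.Quotient.eq_zero_iff_mem.mp h)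
  have hsum : abar + bbar = 1 := by
    rw [habar, hbbar, ← map_add, hab, map_one]
  have hmem : abar ∈ ({0, 1, 2} : Finset Q) := huniv ▸ Finset.mem_univ abar
  simp only [Finset.mem_insert, Finset.mem_singleton] at hmem
  have habar2 : abar = 2 := by
    rcases hmem with h | h | h
    · exact absurd h ha0
    · exfalso; apply hb0; linear_combination hsum - h
    · exact h
  have : ((Ideal.Quotient.mk v.asIdeal) (a + 1)) = 0 := by
    rw [map_add, map_one, ← habar, habar2]
    linear_combination hQ3
  exact Ideal.Quotient.eq_zero_iff_mem.mp this

lemma key_global {K : Type*} [Field K] [NumberField K]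
    (T : Finset (HeightOneSpectrum (𝓞 K)))
    (hprod : Ideal.span {(3 : 𝓞 K)} = ∏ v ∈ T, v.asIdeal)
    (hres : ∀ v ∈ T, Nat.card ((𝓞 K) ⧸ v.asIdeal) = 3)
    (S : Finset (HeightOneSpectrum (𝓞 K)))
    (hS : ∀ v ∈ S, (3 : 𝓞 K) ∉ v.asIdeal)
    (a b : 𝓞 K) (ha : IsSUnit (↑S) ((a : K))) (hb : IsSUnit (↑S) ((b : K)))
    (hab : a + b = 1) : a + 1 ∈ Ideal.span {(3 : 𝓞 K)} := by
  classical
  -- each v ∈ T contains 3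
  have h3mem : ∀ v ∈ T, (3 : 𝓞 K) ∈ v.asIdeal := by
    intro v hv
    have hdvd : v.asIdeal ∣ ∏ w ∈ T, w.asIdeal :=
      Finset.dvd_prod_of_mem _ hv
    have hle : Ideal.span {(3 : 𝓞 K)} ≤ v.asIdeal := by
      rw [hprod]; exact Ideal.le_of_dvd hdvd
    exact hle (Ideal.mem_span_singleton_self _)
  -- a + 1 ∈ v for each v ∈ T
  have hkey : ∀ v ∈ T, a + 1 ∈ v.asIdeal := by
    intro v hv
    have hvS : v ∉ S := fun h => hS v h (h3mem v hv)
    have hav : a ∉ v.asIdeal :=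
      not_mem_of_ordK_eq_zero v a ha.1 (ha.2 v hvS)
    have hbv : b ∉ v.asIdeal :=
      not_mem_of_ordK_eq_zero v b hb.1 (hb.2 v hvS)
    exact key_local v (hres v hv) (h3mem v hv) a b hav hbv hab
  -- product of the distinct primes divides span {a+1}
  have hinj : Function.Injective (HeightOneSpectrum.asIdeal (R := 𝓞 K)) := by
    intro x y h; ext; rw [h]
  have hprodimg : ∏ v ∈ T, v.asIdeal = ∏ I ∈ T.image HeightOneSpectrum.asIdeal, I := by
    symm; exact Finset.prod_image (fun x _ y _ h => hinj h)
  have hdvd : (∏ I ∈ T.image HeightOneSpectrum.asIdeal, I) ∣ Ideal.span {a + 1} := by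
    apply Finset.prod_primes_dvd
    · intro I hI
      obtain ⟨v, hv, rfl⟩ := Finset.mem_image.mp hI
      exact Ideal.prime_of_isPrime v.ne_bot v.isPrime
    · intro I hI
      obtain ⟨v, hv, rfl⟩ := Finset.mem_image.mp hI
      exact Ideal.dvd_span_singleton.mpr (hkey v hv)
  have : Ideal.span {(3 : 𝓞 K)} ∣ Ideal.span {a + 1} := by
    rw [hprod, hprodimg]; exact hdvd
  exact Ideal.le_of_dvd this (Ideal.mem_span_singleton_self _)

theorem S_unit_solutions_congruent_neg_one_mod_3
    (K : Type*) [Field K] [NumberField K]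
    (hsplit3 : ∃ T : Finset (HeightOneSpectrum (𝓞 K)),
      T.card = Module.finrank ℚ K ∧
      Ideal.span {(3 : 𝓞 K)} = ∏ v ∈ T, v.asIdeal ∧
      ∀ v ∈ T, Nat.card ((𝓞 K) ⧸ v.asIdeal) = 3)
    (S : Finset (HeightOneSpectrum (𝓞 K)))
    (hS : ∀ v ∈ S, (3 : 𝓞 K) ∉ v.asIdeal)
    (a b : 𝓞 K) (ha : IsSUnit (↑S) ((a : K))) (hb : IsSUnit (↑S) ((b : K)))
    (hab : a + b = 1) :
    a + 1 ∈ Ideal.span {(3 : 𝓞 K)} ∧ b + 1 ∈ Ideal.span {(3 : 𝓞 K)} := by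
  obtain ⟨T, _, hprod, hres⟩ := hsplit3
  exact ⟨key_global T hprod hres S hS a b ha hb hab,
    key_global T hprod hres S hS b a hb ha (by rw [add_comm]; exact hab)⟩
end
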